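/- Let f₁,…,fₙ, g₁,…,gₙ ∈ L^∞. The following statements are equivalent: (1) Σ_{i=1}^{n} H*_{fᵢ} H_{gᵢ} is a Toeplitz operator (i.e. equals T_φ for some φ ∈ L^∞); (2) Σ_{i=1}^{n} H_{fᵢ} H*_{gᵢ} is a dual Toeplitz operator (i.e. equals T̃_φ for some φ ∈ L^∞); (3) Σ_{i=1}^{n} H*_{fᵢ} H_{gᵢ} = 0; (4) Σ_{i=1}^{n} H_{fᵢ} H*_{gᵢ} = 0; (5) Σ_{i=1}^{n} (fᵢ)₋ ⊗ (gᵢ)₋ = 0. -/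

import Mathlib

noncomputable section

open MeasureTheory Complex ComplexConjugate InnerProductSpace ContinuousLinearMap

namespace GSIO

instance : Fact (0 < 2 * Real.pi) := ⟨by positivity⟩

/-- The circle, modeled as `ℝ / 2πℤ`. -/
abbrev Circ : Type := AddCircle (2 * Real.pi)

/-- Normalized Haar (arc-length) measure on the circle. -/
abbrev μC : Measure Circ := AddCircle.haarAddCircle

/-- `L²` of the circle. -/
abbrev L2 : Type := Lp ℂ 2 μC

/-- `L^∞` of the circle. -/
abbrev Linf : Type := Lp ℂ ⊤ μC

/-- The Hardy space `H²`: those `L²` functions whose negative Fourier coefficients vanish. -/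
def Hardy : Submodule ℂ L2 where
  carrier := {f : L2 | ∀ n : ℤ, n < 0 → fourierCoeff (f : Circ → ℂ) n = 0}
  zero_mem' := by
    intro n hn
    rw [← fourierBasis_repr]
    simp
  add_mem' := by
    intro a b ha hb n hn
    have ha' := ha n hn
    have hb' := hb n hn
    rw [← fourierBasis_repr] at ha' hb' ⊢
    rw [map_add, lp.coeFn_add, Pi.add_apply, ha', hb', add_zero]
  smul_mem' := by
    intro c a ha n hn
    have ha' := ha n hn
    rw [← fourierBasis_repr] at ha' ⊢
    rw [_root_.map_smul, lp.coeFn_smul, Pi.smul_apply, ha', smul_zero]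

theorem isClosed_Hardy : IsClosed (Hardy : Set L2) := by
  have h : (Hardy : Set L2) =
      ⋂ n : {m : ℤ // m < 0}, (fun f : L2 =>
        (innerSL ℂ (fourierBasis (T := 2 * Real.pi) n.1)) f) ⁻¹' {0} := by
    ext f
    simp only [Set.mem_iInter, Set.mem_preimage, Set.mem_singleton_iff, SetLike.mem_coe]
    constructor
    · intro hf n
      have h1 := hf n.1 n.2
      rw [← fourierBasis_repr, fourierBasis.repr_apply_apply] at h1
      simpa using h1
    · intro hf n hn
      have h1 := hf ⟨n, hn⟩
      rw [← fourierBasis_repr, fourierBasis.repr_apply_apply]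
      simpa using h1
  rw [h]
  exact isClosed_iInter fun n =>
    isClosed_singleton.preimage (innerSL ℂ _).continuous

instance : CompleteSpace Hardy := isClosed_Hardy.completeSpace_coe

/-- The Riesz projection `P₊`, i.e. the orthogonal projection of `L²` onto `H²`. -/
def Pp : L2 →L[ℂ] L2 := Hardy.subtypeL.comp (Submodule.orthogonalProjectionOnto Hardy)

/-- `P₋ = I − P₊`. -/
def Pm : L2 →L[ℂ] L2 := ContinuousLinearMap.id ℂ L2 - Pp

/-- The pointwise product of an `L^∞` function with an `L²` function, as an `L²` function. -/
def mulFun (φ : Linf) (x : L2) : L2 :=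
  ((Lp.memLp x).smul (p := ⊤) (r := 2) (Lp.memLp φ)).toLp ((φ : Circ → ℂ) • (x : Circ → ℂ))

theorem mulFun_add (φ : Linf) (x y : L2) : mulFun φ (x + y) = mulFun φ x + mulFun φ y := by
  rw [mulFun, mulFun, mulFun, ← MemLp.toLp_add]
  apply MemLp.toLp_congr
  filter_upwards [Lp.coeFn_add x y] with t ht
  have ht' : ((x + y : L2) : Circ → ℂ) t = (x : Circ → ℂ) t + (y : Circ → ℂ) t := by
    simpa using ht
  simp only [Pi.mul_apply, Pi.smul_apply, Pi.add_apply, smul_eq_mul, ht']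
  ring

theorem mulFun_smul (c : ℂ) (φ : Linf) (x : L2) : mulFun φ (c • x) = c • mulFun φ x := by
  rw [mulFun, mulFun, ← MemLp.toLp_const_smul]
  apply MemLp.toLp_congr
  filter_upwards [Lp.coeFn_smul c x] with t ht
  have ht' : ((c • x : L2) : Circ → ℂ) t = c * (x : Circ → ℂ) t := by
    simpa using ht
  simp only [Pi.mul_apply, Pi.smul_apply, smul_eq_mul, ht']
  ring

theorem norm_mulFun_le (φ : Linf) (x : L2) : ‖mulFun φ x‖ ≤ ‖φ‖ * ‖x‖ := by
  rw [mulFun, Lp.norm_toLp]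
  have h := eLpNorm_smul_le_eLpNorm_top_mul_eLpNorm (μ := μC) 2
    (Lp.aestronglyMeasurable x) (φ : Circ → ℂ)
  refine le_trans (ENNReal.toReal_mono ?_ h) ?_
  · exact ENNReal.mul_ne_top (Lp.eLpNorm_ne_top φ) (Lp.eLpNorm_ne_top x)
  · rw [ENNReal.toReal_mul, Lp.norm_def, Lp.norm_def]

/-- The multiplication operator `M_φ` on `L²`, for `φ ∈ L^∞`. -/
def mul (φ : Linf) : L2 →L[ℂ] L2 :=
  LinearMap.mkContinuous
    { toFun := mulFun φ
      map_add' := mulFun_add φ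
      map_smul' := fun c x => mulFun_smul c φ x }
    ‖φ‖ (fun x => norm_mulFun_le φ x)

/-- Pointwise product in `L^∞`. -/
def mulInf (φ ψ : Linf) : Linf :=
  ((Lp.memLp ψ).smul (p := ⊤) (r := ⊤) (Lp.memLp φ)).toLp ((φ : Circ → ℂ) • (ψ : Circ → ℂ))

/-- Complex conjugation on `L^∞`. -/
def conjInf (φ : Linf) : Linf :=
  (show MemLp (fun t => star ((φ : Circ → ℂ) t)) ⊤ μC from
    ⟨continuous_star.comp_aestronglyMeasurable (Lp.aestronglyMeasurable φ), by
      rw [eLpNorm_congr_norm_ae (g := (φ : Circ → ℂ))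
        (Filter.Eventually.of_forall fun t => norm_star _)]
      exact Lp.eLpNorm_lt_top φ⟩).toLp _

/-- Complex conjugation on `L²`. -/
def conjL2 (x : L2) : L2 :=
  (show MemLp (fun t => star ((x : Circ → ℂ) t)) 2 μC from
    ⟨continuous_star.comp_aestronglyMeasurable (Lp.aestronglyMeasurable x), by
      rw [eLpNorm_congr_norm_ae (g := (x : Circ → ℂ))
        (Filter.Eventually.of_forall fun t => norm_star _)]
      exact Lp.eLpNorm_lt_top x⟩).toLp _

/-- The inclusion `L^∞ ⊆ L²` (the measure is finite). -/
def toL2 (φ : Linf) : L2 := ((Lp.memLp φ).mono_exponent le_top).toLp φ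

/-- The constant function `c` as an element of `L^∞`. -/
def constInf (c : ℂ) : Linf := (memLp_const c).toLp (fun _ => c)

/-- An `L^∞` function is constant (a.e.). -/
def IsConst (φ : Linf) : Prop := ∃ c : ℂ, φ = constInf c

/-- `φ ∈ H^∞ = L^∞ ∩ H²`: the negative Fourier coefficients of `φ` vanish. -/
def MemHinf (φ : Linf) : Prop := ∀ n : ℤ, n < 0 → fourierCoeff (φ : Circ → ℂ) n = 0

/-- The coordinate function `z` as an element of `L^∞`. -/
def zInf : Linf := fourierLp (T := 2 * Real.pi) ⊤ 1

/-- The function `z̄` as an element of `L^∞`. -/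
def zbarInf : Linf := fourierLp (T := 2 * Real.pi) ⊤ (-1)

/-- The antiunitary operator `V : h ↦ z̄ ⬝ conj h` on `L²`. -/
def Vmap (x : L2) : L2 := mul zbarInf (conjL2 x)

/-- `φ₋ = P₋ φ` for `φ ∈ L^∞`, viewed inside `L²`. -/
def mI (φ : Linf) : L2 := Pm (toL2 φ)

/-- The rank-one operator `p ⊗ q : x ↦ ⟪x, q⟫ · p` (the inner product being conjugate-linear
in `q`). -/
def rankOne {E : Type*} [NormedAddCommGroup E] [InnerProductSpace ℂ E] (p q : E) : E →L[ℂ] E :=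
  (innerSL ℂ q).smulRight p

/-- The Hilbert space direct sum `L² ⊕ L²`. -/
abbrev L2sq : Type := WithLp 2 (L2 × L2)

/-- A pair of `L²` functions, viewed as a vector in `L² ⊕ L²`. -/
def pair (x y : L2) : L2sq := (WithLp.equiv 2 (L2 × L2)).symm (x, y)

/-- Notation for the pointwise product in `L^∞`. -/
scoped infixl:70 " ⊙ " => GSIO.mulInf

/-- The Toeplitz operator `T_φ = P₊ M_φ P₊` (viewed as acting on the corner `H²` of `L²`). -/
def Toeplitz (φ : Linf) : L2 →L[ℂ] L2 := Pp ∘L mul φ ∘L Pp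

/-- The Hankel operator `H_φ = P₋ M_φ P₊ : H² → (H²)^⊥` (as a corner operator on `L²`). -/
def Hankel (φ : Linf) : L2 →L[ℂ] L2 := Pm ∘L mul φ ∘L Pp

/-- The dual Toeplitz operator `T̃_φ = P₋ M_φ P₋` on `(H²)^⊥` (as a corner operator on `L²`). -/
def dualToeplitz (φ : Linf) : L2 →L[ℂ] L2 := Pm ∘L mul φ ∘L Pm

/-- The generalized Cauchy singular integral operator with symbol `[[f, u], [g, v]]`:
`R x = P₊ f P₊ x + P₋ g P₊ x + P₊ u P₋ x + P₋ v P₋ x`. -/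
def Rop (f u g v : Linf) : L2 →L[ℂ] L2 :=
  Pp ∘L mul f ∘L Pp + Pm ∘L mul g ∘L Pp + Pp ∘L mul u ∘L Pm + Pm ∘L mul v ∘L Pm

/-- The singular integral operator `S_{f,g} = M_f P₊ + M_g P₋` on `L²`. -/
def Sop (f g : Linf) : L2 →L[ℂ] L2 := mul f ∘L Pp + mul g ∘L Pm



/-- Negation `t ↦ -t` preserves the Haar measure of the circle. -/
theorem mp_neg : MeasurePreserving (fun t : Circ => -t) μC μC :=
  Measure.measurePreserving_neg μC

/-- Composition with `t ↦ -t` on `L²`. -/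
def reflL2 : L2 →L[ℂ] L2 :=
  (Lp.compMeasurePreservingₗᵢ ℂ (fun t : Circ => -t) mp_neg).toContinuousLinearMap

/-- Composition with `t ↦ -t` on `L^∞`: for `φ ∈ L^∞`, `φ̃(z) = φ(z̄)`. -/
def reflInf (φ : Linf) : Linf := Lp.compMeasurePreserving (fun t : Circ => -t) mp_neg φ

/-- `φ* (z) = conj (φ(z̄))`. -/
def starInf (φ : Linf) : Linf := conjInf (reflInf φ)

/-- The flip operator `J : (Jh)(z) = z̄ · h(z̄)` on `L²`. -/
def Jop : L2 →L[ℂ] L2 := mul zbarInf ∘L reflL2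

/-- The Hankel operator `𝕳_φ = P₊ M_φ J` on `H²` (as a corner operator on `L²`). -/
def HankelPlus (φ : Linf) : L2 →L[ℂ] L2 := Pp ∘L mul φ ∘L Jop ∘L Pp

/-- The adjoint `H*_φ` of the Hankel operator `H_φ`. -/
def HankelAdj (φ : Linf) : L2 →L[ℂ] L2 := ContinuousLinearMap.adjoint (Hankel φ)

/-- `θ ∈ L^∞` is an inner function: `θ ∈ H^∞` and `|θ| = 1` a.e. -/
def IsInner (θ : Linf) : Prop := MemHinf θ ∧ ∀ᵐ t ∂μC, ‖(θ : Circ → ℂ) t‖ = 1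

/-- The orthogonal projection of `L²` onto `K_θ^⊥ = θH² ⊕ z̄·conj(H²)`, namely
`P₋ + M_θ P₊ M_{conj θ}`. -/
def Qproj (θ : Linf) : L2 →L[ℂ] L2 := Pm + mul θ ∘L Pp ∘L mul (conjInf θ)

section Aux

local notation "⟪" x ", " y "⟫" => @inner ℂ _ _ x y

/-- The basis vector `z^n` of `L²`. -/
def eb (n : ℤ) : L2 := fourierBasis (T := 2 * Real.pi) n

/-- The `n`-th Fourier coefficient of an `L²` function. -/
def cf (x : L2) (n : ℤ) : ℂ := fourierBasis.repr x n

lemma cf_eq_inner (x : L2) (n : ℤ) : cf x n = ⟪eb n, x⟫ :=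
  fourierBasis.repr_apply_apply x n

lemma cf_eq_fourierCoeff (x : L2) (n : ℤ) : cf x n = fourierCoeff (x : Circ → ℂ) n :=
  fourierBasis_repr x n

lemma inner_eb (x : L2) (n : ℤ) : ⟪x, eb n⟫ = conj (cf x n) := by
  rw [cf_eq_inner, inner_conj_symm]

lemma cf_eb (m n : ℤ) : cf (eb m) n = if n = m then 1 else 0 := by
  rw [cf_eq_inner]
  simp only [eb]
  exact orthonormal_iff_ite.mp fourierBasis.orthonormal n m

lemma ext_cf {x : L2} (h : ∀ n, cf x n = 0) : x = 0 := by
  apply fourierBasis.repr.injective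
  rw [map_zero]
  ext n
  exact h n

lemma cf_sub (x y : L2) (n : ℤ) : cf (x - y) n = cf x n - cf y n := by
  simp [cf_eq_inner, inner_sub_right]

lemma cf_smul (a : ℂ) (x : L2) (n : ℤ) : cf (a • x) n = a * cf x n := by
  simp [cf_eq_inner, inner_smul_right]

lemma cf_sum {ι : Type*} (s : Finset ι) (v : ι → L2) (n : ℤ) :
    cf (∑ i ∈ s, v i) n = ∑ i ∈ s, cf (v i) n := by
  simp [cf_eq_inner, inner_sum]


lemma mem_Hardy_iff {x : L2} : x ∈ Hardy ↔ ∀ n : ℤ, n < 0 → cf x n = 0 := by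
  simp only [cf_eq_fourierCoeff]
  exact Iff.rfl

lemma eb_mem_Hardy {n : ℤ} (hn : 0 ≤ n) : eb n ∈ Hardy := by
  rw [mem_Hardy_iff]
  intro m hm
  rw [cf_eb, if_neg (by omega)]

lemma Pp_apply (x : L2) : Pp x = (Submodule.orthogonalProjectionOnto Hardy x : L2) := rfl

lemma Pm_apply (x : L2) : Pm x = x - Pp x := rfl

lemma cf_Pp (x : L2) (n : ℤ) : cf (Pp x) n = if 0 ≤ n then cf x n else 0 := by
  split_ifs with h
  · have h1 : (x - Pp x) ∈ Hardyᗮ := Submodule.sub_starProjection_mem_orthogonal (K := Hardy) x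
    have h2 : ⟪eb n, x - Pp x⟫ = 0 :=
      (Submodule.mem_orthogonal _ _).1 h1 (eb n) (eb_mem_Hardy h)
    rw [inner_sub_right] at h2
    rw [cf_eq_inner, cf_eq_inner] at *
    linear_combination -h2
  · have h1 : Pp x ∈ Hardy := (Submodule.orthogonalProjectionOnto Hardy x).2
    exact mem_Hardy_iff.1 h1 n (by omega)

lemma cf_Pm (x : L2) (n : ℤ) : cf (Pm x) n = if n < 0 then cf x n else 0 := by
  rw [Pm_apply, cf_sub, cf_Pp]
  rcases lt_or_ge n 0 with h | h
  · rw [if_neg (by omega), if_pos h, sub_zero]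
  · rw [if_pos h, if_neg (by omega), sub_self]

lemma Pp_eb_of_nonneg {n : ℤ} (hn : 0 ≤ n) : Pp (eb n) = eb n := by
  have h : Pp (eb n) - eb n = 0 := ext_cf fun m => by
    rw [cf_sub, cf_Pp]
    split_ifs with h1
    · rw [sub_self]
    · rw [cf_eb, if_neg (by omega), sub_zero]
  exact sub_eq_zero.mp h

lemma Pp_eb_of_neg {n : ℤ} (hn : n < 0) : Pp (eb n) = 0 := by
  apply ext_cf
  intro m
  rw [cf_Pp]
  split_ifs with h1
  · rw [cf_eb, if_neg (by omega)]
  · rfl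

lemma Pm_eb_of_neg {n : ℤ} (hn : n < 0) : Pm (eb n) = eb n := by
  rw [Pm_apply, Pp_eb_of_neg hn, sub_zero]

lemma inner_Pp_left (u v : L2) : ⟪Pp u, v⟫ = ⟪u, Pp v⟫ :=
  Submodule.inner_starProjection_left_eq_right Hardy u v

lemma inner_Pm_left (u v : L2) : ⟪Pm u, v⟫ = ⟪u, Pm v⟫ := by
  simp only [Pm_apply, inner_sub_left, inner_sub_right, inner_Pp_left]


lemma mul_apply' (φ : Linf) (x : L2) : mul φ x = mulFun φ x := rfl

lemma coeFn_mul (φ : Linf) (x : L2) :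
    (mul φ x : Circ → ℂ) =ᵐ[μC] fun t => (φ : Circ → ℂ) t * (x : Circ → ℂ) t := by
  rw [mul_apply', mulFun]
  filter_upwards [MemLp.coeFn_toLp ((Lp.memLp x).smul (p := ⊤) (r := 2) (Lp.memLp φ))] with t ht
  simpa using ht

lemma fourierCoeff_congr {h h' : Circ → ℂ} (hh : h =ᵐ[μC] h') (n : ℤ) :
    fourierCoeff h n = fourierCoeff h' n := by
  unfold fourierCoeff
  exact integral_congr_ae (hh.mono fun t ht => by simp only []; rw [ht])

lemma coeFn_eb (n : ℤ) : (eb n : Circ → ℂ) =ᵐ[μC] fourier n := by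
  have h : eb n = fourierLp 2 n := by
    rw [eb, ← coe_fourierBasis]
  rw [h]
  exact coeFn_fourierLp 2 n

lemma cf_mul_eb (g : Linf) (m n : ℤ) :
    cf (mul g (eb m)) n = fourierCoeff (g : Circ → ℂ) (n - m) := by
  rw [cf_eq_fourierCoeff]
  have h1 : (mul g (eb m) : Circ → ℂ) =ᵐ[μC] fun t => fourier m t * (g : Circ → ℂ) t := by
    filter_upwards [coeFn_mul g (eb m), coeFn_eb m] with t h1 h2
    rw [h1, h2]; ring
  rw [fourierCoeff_congr h1]
  unfold fourierCoeff
  apply integral_congr_ae (Filter.Eventually.of_forall fun t => ?_)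
  simp only [smul_eq_mul]
  rw [← mul_assoc, ← fourier_add]
  congr 2
  ring

lemma cf_toL2 (φ : Linf) (n : ℤ) : cf (toL2 φ) n = fourierCoeff (φ : Circ → ℂ) n := by
  rw [cf_eq_fourierCoeff]
  exact fourierCoeff_congr (MemLp.coeFn_toLp _) n

lemma cf_mI (φ : Linf) (n : ℤ) :
    cf (mI φ) n = if n < 0 then fourierCoeff (φ : Circ → ℂ) n else 0 := by
  rw [mI, cf_Pm, cf_toL2]


lemma Hankel_apply (g : Linf) (x : L2) : Hankel g x = Pm (mul g (Pp x)) := rfl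

lemma cf_Hankel (g : Linf) (m : ℕ) (n : ℤ) :
    cf (Hankel g (eb m)) n = if n < 0 then fourierCoeff (g : Circ → ℂ) (n - m) else 0 := by
  rw [Hankel_apply, Pp_eb_of_nonneg (by positivity), cf_Pm, cf_mul_eb]

lemma Hankel_eb_neg (g : Linf) {n : ℤ} (hn : n < 0) : Hankel g (eb n) = 0 := by
  rw [Hankel_apply, Pp_eb_of_neg hn, map_zero, map_zero]

lemma cf_Hankel_nonneg (g : Linf) (x : L2) {n : ℤ} (hn : 0 ≤ n) :
    cf (Hankel g x) n = 0 := by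
  rw [Hankel_apply, cf_Pm, if_neg (by omega)]

lemma cf_HankelAdj (g : Linf) (y : L2) (n : ℤ) :
    cf (HankelAdj g y) n = ⟪Hankel g (eb n), y⟫ := by
  rw [cf_eq_inner, HankelAdj, ContinuousLinearMap.adjoint_inner_right]

lemma cf_HankelAdj_neg (g : Linf) (y : L2) {n : ℤ} (hn : n < 0) :
    cf (HankelAdj g y) n = 0 := by
  rw [cf_HankelAdj, Hankel_eb_neg g hn, inner_zero_left]

lemma HankelAdj_eb_nonneg (g : Linf) {n : ℤ} (hn : 0 ≤ n) : HankelAdj g (eb n) = 0 := by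
  apply ext_cf
  intro m
  rcases lt_or_ge m 0 with hm | hm
  · exact cf_HankelAdj_neg g _ hm
  · rw [cf_HankelAdj, inner_eb, cf_Hankel_nonneg g _ hn, map_zero]

lemma eb_eq (n : ℤ) : (fourierBasis (T := 2 * Real.pi)) n = eb n := rfl

lemma hasSum_inner_cf (u v : L2) :
    HasSum (fun n : ℤ => conj (cf u n) * cf v n) ⟪u, v⟫ := by
  have h := fourierBasis.hasSum_inner_mul_inner (𝕜 := ℂ) u v
  simp only [eb_eq, inner_eb, ← cf_eq_inner] at h
  exact h

lemma hasSum_inner_neg (u v : L2) (hu : ∀ n : ℤ, 0 ≤ n → cf u n = 0) :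
    HasSum (fun k : ℕ => conj (cf u (-1 - k)) * cf v (-1 - k)) ⟪u, v⟫ := by
  have hinj : Function.Injective (fun k : ℕ => (-1 - k : ℤ)) := by
    intro a b h
    simp only at h
    omega
  have hsupp : ∀ n ∉ Set.range (fun k : ℕ => (-1 - k : ℤ)),
      conj (cf u n) * cf v n = 0 := by
    intro n hn
    have h0 : 0 ≤ n := by
      by_contra h
      exact hn ⟨(-1 - n).toNat, show (-1 - ((-1 - n).toNat : ℤ)) = n by omega⟩
    rw [hu n h0, map_zero, zero_mul]
  exact (Function.Injective.hasSum_iff (a := ⟪u, v⟫)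
    (f := fun n : ℤ => conj (cf u n) * cf v n) hinj hsupp).2 (hasSum_inner_cf u v)

lemma hasSum_inner_nonneg (u v : L2) (hu : ∀ n : ℤ, n < 0 → cf u n = 0) :
    HasSum (fun k : ℕ => conj (cf u k) * cf v k) ⟪u, v⟫ := by
  have hinj : Function.Injective (fun k : ℕ => (k : ℤ)) := by
    intro a b h
    simpa using h
  have hsupp : ∀ n ∉ Set.range (fun k : ℕ => (k : ℤ)),
      conj (cf u n) * cf v n = 0 := by
    intro n hn
    have h0 : n < 0 := by
      by_contra h
      exact hn ⟨n.toNat, show ((n.toNat : ℤ)) = n by omega⟩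
    rw [hu n h0, map_zero, zero_mul]
  exact (Function.Injective.hasSum_iff (a := ⟪u, v⟫)
    (f := fun n : ℤ => conj (cf u n) * cf v n) hinj hsupp).2 (hasSum_inner_cf u v)


/-- The matrix `B(a,c) = Σᵢ conj(ĝᵢ(-1-c)) · f̂ᵢ(-1-a)`. -/
def Bcoef (n : ℕ) (f g : Fin n → Linf) (a c : ℕ) : ℂ :=
  ∑ i, conj (fourierCoeff ((g i : Circ → ℂ)) (-1 - (c : ℤ))) *
    fourierCoeff ((f i : Circ → ℂ)) (-1 - (a : ℤ))

lemma hasSum_entry1 (n : ℕ) (f g : Fin n → Linf) (m m' : ℕ) :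
    HasSum (fun k : ℕ => Bcoef n f g (m' + k) (m + k))
      ⟪(∑ i, HankelAdj (f i) ∘L Hankel (g i)) (eb m), eb m'⟫ := by
  have happ : (∑ i, HankelAdj (f i) ∘L Hankel (g i)) (eb (m : ℤ))
      = ∑ i, HankelAdj (f i) (Hankel (g i) (eb (m : ℤ))) := by
    simp only [ContinuousLinearMap.sum_apply, ContinuousLinearMap.comp_apply]
  rw [happ, sum_inner]
  have hterm : ∀ i : Fin n, ⟪HankelAdj (f i) (Hankel (g i) (eb (m : ℤ))), eb (m' : ℤ)⟫
      = ⟪Hankel (g i) (eb (m : ℤ)), Hankel (f i) (eb (m' : ℤ))⟫ := by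
    intro i
    rw [HankelAdj]
    exact ContinuousLinearMap.adjoint_inner_left _ _ _
  simp only [hterm]
  have hi : ∀ i : Fin n, HasSum
      (fun k : ℕ => conj (fourierCoeff ((g i : Circ → ℂ)) (-1 - ((m + k : ℕ) : ℤ))) *
        fourierCoeff ((f i : Circ → ℂ)) (-1 - ((m' + k : ℕ) : ℤ)))
      ⟪Hankel (g i) (eb (m : ℤ)), Hankel (f i) (eb (m' : ℤ))⟫ := by
    intro i
    have h := hasSum_inner_neg (Hankel (g i) (eb (m : ℤ))) (Hankel (f i) (eb (m' : ℤ)))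
      (fun n' hn' => cf_Hankel_nonneg _ _ hn')
    have heq : (fun k : ℕ => conj (cf (Hankel (g i) (eb (m : ℤ))) (-1 - k)) *
        cf (Hankel (f i) (eb (m' : ℤ))) (-1 - k))
        = fun k : ℕ => conj (fourierCoeff ((g i : Circ → ℂ)) (-1 - ((m + k : ℕ) : ℤ))) *
            fourierCoeff ((f i : Circ → ℂ)) (-1 - ((m' + k : ℕ) : ℤ)) := by
      funext k
      rw [cf_Hankel, cf_Hankel, if_pos (by omega), if_pos (by omega)]
      congr 2
      · push_cast; ring
      · push_cast; ring
    rwa [heq] at h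
  have hsum := hasSum_sum (fun i (_ : i ∈ Finset.univ) => hi i)
  simpa only [Bcoef] using hsum

lemma toeplitz_entry (φ : Linf) (m m' : ℕ) :
    ⟪Toeplitz φ (eb (m : ℤ)), eb (m' : ℤ)⟫ =
      conj (fourierCoeff (φ : Circ → ℂ) ((m' : ℤ) - (m : ℤ))) := by
  have h1 : Toeplitz φ (eb (m : ℤ)) = Pp (mul φ (eb (m : ℤ))) := by
    simp only [Toeplitz, ContinuousLinearMap.comp_apply, Pp_eb_of_nonneg (by positivity : (0:ℤ) ≤ (m:ℤ))]
  rw [h1, inner_Pp_left, Pp_eb_of_nonneg (by positivity : (0:ℤ) ≤ (m':ℤ)), inner_eb, cf_mul_eb]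


lemma hasSum_entry2 (n : ℕ) (f g : Fin n → Linf) (p q : ℕ) :
    HasSum (fun k : ℕ => conj (Bcoef n f g (p + k) (q + k)))
      ⟪(∑ i, Hankel (f i) ∘L HankelAdj (g i)) (eb (-1 - (q : ℤ))), eb (-1 - (p : ℤ))⟫ := by
  have happ : (∑ i, Hankel (f i) ∘L HankelAdj (g i)) (eb (-1 - (q : ℤ)))
      = ∑ i, Hankel (f i) (HankelAdj (g i) (eb (-1 - (q : ℤ)))) := by
    simp only [ContinuousLinearMap.sum_apply, ContinuousLinearMap.comp_apply]
  rw [happ, sum_inner]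
  have hterm : ∀ i : Fin n, ⟪Hankel (f i) (HankelAdj (g i) (eb (-1 - (q : ℤ)))), eb (-1 - (p : ℤ))⟫
      = ⟪HankelAdj (g i) (eb (-1 - (q : ℤ))), HankelAdj (f i) (eb (-1 - (p : ℤ)))⟫ := by
    intro i
    conv_rhs => rw [HankelAdj]
    exact (ContinuousLinearMap.adjoint_inner_right _ _ _).symm
  simp only [hterm]
  have hi : ∀ i : Fin n, HasSum
      (fun k : ℕ => fourierCoeff ((g i : Circ → ℂ)) (-1 - ((q + k : ℕ) : ℤ)) *
        conj (fourierCoeff ((f i : Circ → ℂ)) (-1 - ((p + k : ℕ) : ℤ))))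
      ⟪HankelAdj (g i) (eb (-1 - (q : ℤ))), HankelAdj (f i) (eb (-1 - (p : ℤ)))⟫ := by
    intro i
    have h := hasSum_inner_nonneg (HankelAdj (g i) (eb (-1 - (q : ℤ))))
      (HankelAdj (f i) (eb (-1 - (p : ℤ)))) (fun n' hn' => cf_HankelAdj_neg _ _ hn')
    have heq : (fun k : ℕ => conj (cf (HankelAdj (g i) (eb (-1 - (q : ℤ)))) k) *
        cf (HankelAdj (f i) (eb (-1 - (p : ℤ)))) k)
        = fun k : ℕ => fourierCoeff ((g i : Circ → ℂ)) (-1 - ((q + k : ℕ) : ℤ)) *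
            conj (fourierCoeff ((f i : Circ → ℂ)) (-1 - ((p + k : ℕ) : ℤ))) := by
      funext k
      rw [cf_HankelAdj, cf_HankelAdj, inner_eb, inner_eb, cf_Hankel, cf_Hankel,
        if_pos (by omega), if_pos (by omega), Complex.conj_conj]
      congr 2
      · push_cast; ring
      · push_cast; ring
    rwa [heq] at h
  have hsum := hasSum_sum (fun i (_ : i ∈ Finset.univ) => hi i)
  have hBc : (fun k : ℕ => conj (Bcoef n f g (p + k) (q + k)))
      = fun k : ℕ => ∑ i, fourierCoeff ((g i : Circ → ℂ)) (-1 - ((q + k : ℕ) : ℤ)) *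
          conj (fourierCoeff ((f i : Circ → ℂ)) (-1 - ((p + k : ℕ) : ℤ))) := by
    funext k
    rw [Bcoef, map_sum]
    refine Finset.sum_congr rfl fun i _ => ?_
    rw [map_mul, Complex.conj_conj]
  rw [hBc]
  exact hsum

lemma dual_entry (φ : Linf) (p q : ℕ) :
    ⟪dualToeplitz φ (eb (-1 - (q : ℤ))), eb (-1 - (p : ℤ))⟫ =
      conj (fourierCoeff (φ : Circ → ℂ) ((q : ℤ) - (p : ℤ))) := by
  have h1 : dualToeplitz φ (eb (-1 - (q : ℤ))) = Pm (mul φ (eb (-1 - (q : ℤ)))) := by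
    simp only [dualToeplitz, ContinuousLinearMap.comp_apply,
      Pm_eb_of_neg (by omega : (-1 - (q : ℤ)) < 0)]
  rw [h1, inner_Pm_left, Pm_eb_of_neg (by omega : (-1 - (p : ℤ)) < 0), inner_eb, cf_mul_eb]
  have h2 : (-1 - (p : ℤ)) - (-1 - (q : ℤ)) = (q : ℤ) - (p : ℤ) := by ring
  rw [h2]

lemma mul_zero' : mul (0 : Linf) = 0 := by
  ext x
  have h := norm_mulFun_le (0 : Linf) x
  rw [norm_zero, zero_mul] at h
  have h2 : mulFun (0 : Linf) x = 0 := norm_le_zero_iff.mp h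
  rw [ContinuousLinearMap.zero_apply, ← h2]
  rfl

lemma Toeplitz_zero : Toeplitz (0 : Linf) = 0 := by
  rw [Toeplitz, mul_zero']
  ext x
  simp

lemma dualToeplitz_zero : dualToeplitz (0 : Linf) = 0 := by
  rw [dualToeplitz, mul_zero']
  ext x
  simp

lemma op_ext {A : L2 →L[ℂ] L2} (h : ∀ n : ℤ, A (eb n) = 0) : A = 0 := by
  have hd : Dense ((Submodule.span ℂ (Set.range ⇑(fourierBasis (T := 2 * Real.pi)))) : Set L2) := by
    rw [Submodule.dense_iff_topologicalClosure_eq_top]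
    exact fourierBasis.dense_span
  have heq : Set.EqOn (⇑A) (⇑(0 : L2 →L[ℂ] L2))
      ((Submodule.span ℂ (Set.range ⇑(fourierBasis (T := 2 * Real.pi)))) : Set L2) := by
    intro y hy
    simp only [SetLike.mem_coe] at hy
    induction hy using Submodule.span_induction with
    | mem y hy =>
      obtain ⟨nn, rfl⟩ := hy
      rw [ContinuousLinearMap.zero_apply, eb_eq]
      exact h nn
    | zero => simp
    | add u v _ _ hu hv => simp only [map_add, hu, hv, ContinuousLinearMap.zero_apply, add_zero]
    | smul a u _ hu =>
      rw [ContinuousLinearMap.zero_apply] at hu ⊢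
      rw [A.map_smul, hu, smul_zero]
  have hAB := Continuous.ext_on hd A.continuous (0 : L2 →L[ℂ] L2).continuous heq
  exact ContinuousLinearMap.ext fun x => congrFun hAB x


lemma conj_eq_zero' {z : ℂ} (h : conj z = 0) : z = 0 := by
  have h2 := congrArg conj h
  simpa using h2

lemma cf_zero (n : ℤ) : cf (0 : L2) n = 0 := by
  rw [cf_eq_inner, inner_zero_right]

lemma B_zero_of_toeplitz {n : ℕ} {f g : Fin n → Linf} {φ : Linf}
    (hφ : ∑ i, HankelAdj (f i) ∘L Hankel (g i) = Toeplitz φ) :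
    ∀ a c : ℕ, Bcoef n f g a c = 0 := by
  intro a c
  have h1 := hasSum_entry1 n f g c a
  have h2 := hasSum_entry1 n f g (c + 1) (a + 1)
  rw [hφ, toeplitz_entry] at h1 h2
  have hcast : ((a + 1 : ℕ) : ℤ) - ((c + 1 : ℕ) : ℤ) = (a : ℤ) - (c : ℤ) := by push_cast; ring
  rw [hcast] at h2
  have h2' : HasSum (fun k : ℕ => Bcoef n f g (a + (k + 1)) (c + (k + 1)))
      (conj (fourierCoeff (φ : Circ → ℂ) ((a : ℤ) - (c : ℤ)))) := by
    have heq : (fun k : ℕ => Bcoef n f g ((a + 1) + k) ((c + 1) + k))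
        = fun k : ℕ => Bcoef n f g (a + (k + 1)) (c + (k + 1)) := by
      funext k
      congr 1 <;> omega
    rwa [heq] at h2
  have h3 := (hasSum_nat_add_iff (f := fun k : ℕ => Bcoef n f g (a + k) (c + k)) 1).1 h2'
  have h4 := h1.unique h3
  rw [Finset.range_one, Finset.sum_singleton] at h4
  have h5 := left_eq_add.mp h4
  simpa using h5

lemma B_zero_of_dual {n : ℕ} {f g : Fin n → Linf} {φ : Linf}
    (hφ : ∑ i, Hankel (f i) ∘L HankelAdj (g i) = dualToeplitz φ) :
    ∀ a c : ℕ, Bcoef n f g a c = 0 := by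
  intro a c
  have h1 := hasSum_entry2 n f g a c
  have h2 := hasSum_entry2 n f g (a + 1) (c + 1)
  rw [hφ, dual_entry] at h1 h2
  have hcast : ((c + 1 : ℕ) : ℤ) - ((a + 1 : ℕ) : ℤ) = (c : ℤ) - (a : ℤ) := by push_cast; ring
  rw [hcast] at h2
  have h2' : HasSum (fun k : ℕ => conj (Bcoef n f g (a + (k + 1)) (c + (k + 1))))
      (conj (fourierCoeff (φ : Circ → ℂ) ((c : ℤ) - (a : ℤ)))) := by
    have heq : (fun k : ℕ => conj (Bcoef n f g ((a + 1) + k) ((c + 1) + k)))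
        = fun k : ℕ => conj (Bcoef n f g (a + (k + 1)) (c + (k + 1))) := by
      funext k
      congr 2 <;> omega
    rwa [heq] at h2
  have h3 := (hasSum_nat_add_iff (f := fun k : ℕ => conj (Bcoef n f g (a + k) (c + k))) 1).1 h2'
  have h4 := h1.unique h3
  rw [Finset.range_one, Finset.sum_singleton] at h4
  have h5 := left_eq_add.mp h4
  apply conj_eq_zero'
  simpa using h5

lemma sum1_zero {n : ℕ} {f g : Fin n → Linf}
    (hB : ∀ a c : ℕ, Bcoef n f g a c = 0) :
    ∑ i, HankelAdj (f i) ∘L Hankel (g i) = 0 := by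
  apply op_ext
  intro nn
  rcases lt_or_ge nn 0 with hnn | hnn
  · have hz : ∀ i : Fin n, HankelAdj (f i) (Hankel (g i) (eb nn)) = 0 := fun i => by
      rw [Hankel_eb_neg _ hnn, map_zero]
    simp only [ContinuousLinearMap.sum_apply, ContinuousLinearMap.comp_apply, hz]
    exact Finset.sum_const_zero
  · obtain ⟨m, rfl⟩ : ∃ m : ℕ, nn = (m : ℤ) := ⟨nn.toNat, by omega⟩
    apply ext_cf
    intro n'
    have happ : (∑ i, HankelAdj (f i) ∘L Hankel (g i)) (eb (m : ℤ))
        = ∑ i, HankelAdj (f i) (Hankel (g i) (eb (m : ℤ))) := by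
      simp only [ContinuousLinearMap.sum_apply, ContinuousLinearMap.comp_apply]
    rcases lt_or_ge n' 0 with hn' | hn'
    · rw [happ, cf_sum]
      exact Finset.sum_eq_zero fun i _ => cf_HankelAdj_neg _ _ hn'
    · obtain ⟨m', rfl⟩ : ∃ m' : ℕ, n' = (m' : ℤ) := ⟨n'.toNat, by omega⟩
      have h1 : HasSum (fun k : ℕ => (0 : ℂ))
          ⟪(∑ i, HankelAdj (f i) ∘L Hankel (g i)) (eb (m : ℤ)), eb (m' : ℤ)⟫ := by
        have h0 := hasSum_entry1 n f g m m'
        simpa only [hB] using h0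
      have h2 := (h1.unique hasSum_zero)
      have h3 := inner_eb ((∑ i, HankelAdj (f i) ∘L Hankel (g i)) (eb (m : ℤ))) (m' : ℤ)
      rw [h2] at h3
      exact conj_eq_zero' h3.symm

lemma sum2_zero {n : ℕ} {f g : Fin n → Linf}
    (hB : ∀ a c : ℕ, Bcoef n f g a c = 0) :
    ∑ i, Hankel (f i) ∘L HankelAdj (g i) = 0 := by
  apply op_ext
  intro nn
  rcases le_or_gt 0 nn with hnn | hnn
  · have hz : ∀ i : Fin n, Hankel (f i) (HankelAdj (g i) (eb nn)) = 0 := fun i => by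
      rw [HankelAdj_eb_nonneg _ hnn, map_zero]
    simp only [ContinuousLinearMap.sum_apply, ContinuousLinearMap.comp_apply, hz]
    exact Finset.sum_const_zero
  · obtain ⟨q, rfl⟩ : ∃ q : ℕ, nn = -1 - (q : ℤ) := ⟨(-1 - nn).toNat, by omega⟩
    apply ext_cf
    intro n'
    have happ : (∑ i, Hankel (f i) ∘L HankelAdj (g i)) (eb (-1 - (q : ℤ)))
        = ∑ i, Hankel (f i) (HankelAdj (g i) (eb (-1 - (q : ℤ)))) := by
      simp only [ContinuousLinearMap.sum_apply, ContinuousLinearMap.comp_apply]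
    rcases le_or_gt 0 n' with hn' | hn'
    · rw [happ, cf_sum]
      exact Finset.sum_eq_zero fun i _ => cf_Hankel_nonneg _ _ hn'
    · obtain ⟨p, rfl⟩ : ∃ p : ℕ, n' = -1 - (p : ℤ) := ⟨(-1 - n').toNat, by omega⟩
      have h1 : HasSum (fun k : ℕ => (0 : ℂ))
          ⟪(∑ i, Hankel (f i) ∘L HankelAdj (g i)) (eb (-1 - (q : ℤ))), eb (-1 - (p : ℤ))⟫ := by
        have h0 := hasSum_entry2 n f g p q
        simpa only [hB, map_zero] using h0
      have h2 := (h1.unique hasSum_zero)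
      have h3 := inner_eb ((∑ i, Hankel (f i) ∘L HankelAdj (g i)) (eb (-1 - (q : ℤ)))) (-1 - (p : ℤ))
      rw [h2] at h3
      exact conj_eq_zero' h3.symm

lemma rankOne_apply' (p q x : L2) : rankOne p q x = ⟪q, x⟫ • p := rfl

lemma cf_sum5_apply (n : ℕ) (f g : Fin n → Linf) (p q : ℕ) :
    cf ((∑ i, rankOne (mI (f i)) (mI (g i))) (eb (-1 - (q : ℤ)))) (-1 - (p : ℤ))
      = Bcoef n f g p q := by
  rw [ContinuousLinearMap.sum_apply, cf_sum, Bcoef]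
  refine Finset.sum_congr rfl fun i _ => ?_
  rw [rankOne_apply', cf_smul, inner_eb, cf_mI, if_pos (by omega), cf_mI, if_pos (by omega)]

lemma sum5_zero {n : ℕ} {f g : Fin n → Linf}
    (hB : ∀ a c : ℕ, Bcoef n f g a c = 0) :
    ∑ i, rankOne (mI (f i)) (mI (g i)) = 0 := by
  apply op_ext
  intro nn
  have happ : (∑ i, rankOne (mI (f i)) (mI (g i))) (eb nn)
      = ∑ i, ⟪mI (g i), eb nn⟫ • mI (f i) := by
    rw [ContinuousLinearMap.sum_apply]
    exact Finset.sum_congr rfl fun i _ => rfl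
  rw [happ]
  rcases le_or_gt 0 nn with hnn | hnn
  · apply Finset.sum_eq_zero
    intro i _
    rw [inner_eb, cf_mI, if_neg (by omega), map_zero, zero_smul]
  · obtain ⟨q, rfl⟩ : ∃ q : ℕ, nn = -1 - (q : ℤ) := ⟨(-1 - nn).toNat, by omega⟩
    apply ext_cf
    intro n'
    rw [cf_sum]
    rcases le_or_gt 0 n' with hn' | hn'
    · apply Finset.sum_eq_zero
      intro i _
      rw [cf_smul, cf_mI, if_neg (by omega), mul_zero]
    · obtain ⟨p, rfl⟩ : ∃ p : ℕ, n' = -1 - (p : ℤ) := ⟨(-1 - n').toNat, by omega⟩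
      have hsum : ∑ i, cf (⟪mI (g i), eb (-1 - (q : ℤ))⟫ • mI (f i)) (-1 - (p : ℤ))
          = Bcoef n f g p q := by
        rw [Bcoef]
        refine Finset.sum_congr rfl fun i _ => ?_
        rw [cf_smul, inner_eb, cf_mI, if_pos (by omega), cf_mI, if_pos (by omega)]
      rw [hsum, hB]

lemma B_zero_of_sum5 {n : ℕ} {f g : Fin n → Linf}
    (h : ∑ i, rankOne (mI (f i)) (mI (g i)) = 0) :
    ∀ a c : ℕ, Bcoef n f g a c = 0 := by
  intro a c
  rw [← cf_sum5_apply n f g a c, h, ContinuousLinearMap.zero_apply, cf_zero]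


end Aux

/-- For `f₁, …, fₙ, g₁, …, gₙ ∈ L^∞` the following are equivalent:
(1) `Σᵢ H*_{fᵢ} H_{gᵢ}` is a Toeplitz operator; (2) `Σᵢ H_{fᵢ} H*_{gᵢ}` is a dual Toeplitz
operator; (3) `Σᵢ H*_{fᵢ} H_{gᵢ} = 0`; (4) `Σᵢ H_{fᵢ} H*_{gᵢ} = 0`;
(5) `Σᵢ (fᵢ)₋ ⊗ (gᵢ)₋ = 0`. -/
theorem statement1 (n : ℕ) (f g : Fin n → Linf) :
    List.TFAE
      [∃ φ : Linf, ∑ i, HankelAdj (f i) ∘L Hankel (g i) = Toeplitz φ,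
       ∃ φ : Linf, ∑ i, Hankel (f i) ∘L HankelAdj (g i) = dualToeplitz φ,
       ∑ i, HankelAdj (f i) ∘L Hankel (g i) = 0,
       ∑ i, Hankel (f i) ∘L HankelAdj (g i) = 0,
       ∑ i, rankOne (mI (f i)) (mI (g i)) = 0] := by
  tfae_have 1 → 5 := fun ⟨φ, hφ⟩ => sum5_zero (B_zero_of_toeplitz hφ)
  tfae_have 2 → 5 := fun ⟨φ, hφ⟩ => sum5_zero (B_zero_of_dual hφ)
  tfae_have 5 → 3 := fun h => sum1_zero (B_zero_of_sum5 h)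
  tfae_have 5 → 4 := fun h => sum2_zero (B_zero_of_sum5 h)
  tfae_have 3 → 1 := fun h => ⟨0, by rw [h, Toeplitz_zero]⟩
  tfae_have 4 → 2 := fun h => ⟨0, by rw [h, dualToeplitz_zero]⟩
  tfae_finish

end GSIO
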